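/- Canonical model existence lemma for knowledge: if K_C φ ∉ hd(w) for a state w of the canonical model, then there exists a state u with w ∼_C u and φ ∉ hd(u); concretely, the set X = {¬φ} ∪ {ψ : K_C ψ ∈ hd(w)} is consistent, so w can be extended by an edge labelled C to a maximal consistent extension of X. -/

import Mathlib

/-- Formulas of the logic of clandestine operations: propositional variables,
falsum, negation, implication, distributed knowledge `know C φ` and
clandestine power `how C φ` for coalitions `C ⊆ Ag`. -/
inductive Formula (α : Type) (Ag : Type) : Type
  | var  : α → Formula α Ag
  | bot  : Formula α Ag
  | neg  : Formula α Ag → Formula α Ag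
  | imp  : Formula α Ag → Formula α Ag → Formula α Ag
  | know : Set Ag → Formula α Ag → Formula α Ag
  | how  : Set Ag → Formula α Ag → Formula α Ag

namespace Formula

/-- Defined disjunction. -/
def or {α Ag : Type} (φ ψ : Formula α Ag) : Formula α Ag := imp (neg φ) ψ

/-- Defined verum. -/
def top {α Ag : Type} : Formula α Ag := neg bot

/-- Boolean evaluation treating variables and modal formulas as atoms. -/
def eval {α Ag : Type} (v : Formula α Ag → Bool) : Formula α Ag → Bool
  | var p => v (var p)
  | bot => false
  | neg φ => !(eval v φ)
  | imp φ ψ => !(eval v φ) || eval v ψ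
  | know C φ => v (know C φ)
  | how C φ => v (how C φ)

end Formula

/-- A propositional tautology: true under every Boolean valuation of its
atoms (variables and modal subformulas). -/
def Tautology {α Ag : Type} (φ : Formula α Ag) : Prop :=
  ∀ v, φ.eval v = true

/-- Theorems of the logic of clandestine operations. -/
inductive Prov {α Ag : Type} : Formula α Ag → Prop
  | taut {φ} : Tautology φ → Prov φ
  | truth (C : Set Ag) (φ) : Prov (.imp (.know C φ) φ)
  | negIntro (C : Set Ag) (φ) :
      Prov (.imp (.neg (.know C φ)) (.know C (.neg (.know C φ))))
  | distrib (C : Set Ag) (φ ψ) :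
      Prov (.imp (.know C (.imp φ ψ)) (.imp (.know C φ) (.know C ψ)))
  | mono {C' C : Set Ag} (φ) : C' ⊆ C → Prov (.imp (.know C' φ) (.know C φ))
  | stratIntro (C : Set Ag) (φ) : Prov (.imp (.how C φ) (.know C (.how C φ)))
  | cia {C I A : Set Ag} (φ ψ) : C ∩ (I ∪ A) = ∅ →
      Prov (.imp
        (.know (C ∪ I) (.know (A ∪ I) (.imp (.know C φ) (.know (C ∪ I) ψ))))
        (.imp (.how C φ) (.how (C ∪ I) ψ)))
  | nonterm (C : Set Ag) : Prov (.neg (.how C .bot))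
  | emptyCoal (φ : Formula α Ag) : Prov (.neg (.how ∅ φ))
  | mp {φ ψ} : Prov (.imp φ ψ) → Prov φ → Prov ψ
  | necK (C : Set Ag) {φ} : Prov φ → Prov (.know C φ)
  | necH {C : Set Ag} {φ} : C ≠ ∅ → Prov φ → Prov (.how C φ)

/-- Derivability from a set of hypotheses `X`: from theorems of the system
and members of `X` using Modus Ponens only. -/
inductive ProvFrom {α Ag : Type} (X : Set (Formula α Ag)) : Formula α Ag → Prop
  | hyp {φ} : φ ∈ X → ProvFrom X φ
  | thm {φ} : Prov φ → ProvFrom X φ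
  | mp {φ ψ} : ProvFrom X (.imp φ ψ) → ProvFrom X φ → ProvFrom X ψ

/-- A set of formulas is consistent if falsum is not derivable from it. -/
def Consistent {α Ag : Type} (X : Set (Formula α Ag)) : Prop :=
  ¬ ProvFrom X .bot

/-- Maximal consistent set of formulas. -/
def MCS {α Ag : Type} (X : Set (Formula α Ag)) : Prop :=
  Consistent X ∧ ∀ φ : Formula α Ag, φ ∈ X ∨ .neg φ ∈ X

/-- Canonical states are lists of (coalition, maximal consistent set) steps,
most recent step first, rooted at the fixed maximal consistent set `X₀`.
`hd X₀ w` is the maximal consistent set labelling the node `w`. -/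
def hd {α Ag : Type} (X₀ : Set (Formula α Ag)) :
    List (Set Ag × Set (Formula α Ag)) → Set (Formula α Ag)
  | [] => X₀
  | (_, X) :: _ => X

/-- The canonical-state condition: every set along the path is maximal
consistent and contains everything known (to the edge coalition) at its
parent. -/
def IsCanState {α Ag : Type} (X₀ : Set (Formula α Ag)) :
    List (Set Ag × Set (Formula α Ag)) → Prop
  | [] => True
  | (C, X) :: w => IsCanState X₀ w ∧ MCS X ∧
      {φ : Formula α Ag | Formula.know C φ ∈ hd X₀ w} ⊆ X

/-- Canonical indistinguishability for agent `a`: all edges on the simple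
tree path between `w` and `w'` (through a common ancestor `v`) are labelled
with a coalition containing `a`. -/
def CSim {α Ag : Type} (a : Ag)
    (w w' : List (Set Ag × Set (Formula α Ag))) : Prop :=
  ∃ v, v <:+ w ∧ v <:+ w' ∧
    (∀ p ∈ w.take (w.length - v.length), a ∈ p.1) ∧
    (∀ p ∈ w'.take (w'.length - v.length), a ∈ p.1)

/-- Canonical coalition indistinguishability. -/
def CSimC {α Ag : Type} (C : Set Ag)
    (w w' : List (Set Ag × Set (Formula α Ag))) : Prop :=
  ∀ a ∈ C, CSim a w w'

/-- The canonical mechanism: `(w, C, φ, u) ∈ M` iff `w ∼_{𝒜∖C} u` and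
`H_C φ ∈ hd w` implies `K_C φ ∈ hd u`. -/
def CanM {α Ag : Type} (X₀ : Set (Formula α Ag))
    (w : List (Set Ag × Set (Formula α Ag))) (C : Set Ag) (φ : Formula α Ag)
    (u : List (Set Ag × Set (Formula α Ag))) : Prop :=
  CSimC Cᶜ w u ∧ (Formula.how C φ ∈ hd X₀ w → Formula.know C φ ∈ hd X₀ u)

section Aux

variable {α Ag : Type}

/-! ### Tautology helpers -/

private lemma taut_k (φ ψ : Formula α Ag) : Prov (.imp φ (.imp ψ φ)) :=
  Prov.taut fun v => by
    cases hφ : φ.eval v <;> cases hψ : ψ.eval v <;> simp [Formula.eval, hφ, hψ]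

private lemma taut_s (χ ψ φ : Formula α Ag) :
    Prov (.imp (.imp χ (.imp ψ φ)) (.imp (.imp χ ψ) (.imp χ φ))) :=
  Prov.taut fun v => by
    cases hχ : χ.eval v <;> cases hψ : ψ.eval v <;> cases hφ : φ.eval v <;>
      simp [Formula.eval, hχ, hψ, hφ]

private lemma taut_id (φ : Formula α Ag) : Prov (.imp φ φ) :=
  Prov.taut fun v => by cases hφ : φ.eval v <;> simp [Formula.eval, hφ]

private lemma taut_dne (φ : Formula α Ag) :
    Prov (.imp (.imp (.neg φ) .bot) φ) :=
  Prov.taut fun v => by cases hφ : φ.eval v <;> simp [Formula.eval, hφ]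

private lemma taut_contra (φ : Formula α Ag) :
    Prov (.imp φ (.imp (.neg φ) .bot)) :=
  Prov.taut fun v => by cases hφ : φ.eval v <;> simp [Formula.eval, hφ]

private lemma taut_cases (φ : Formula α Ag) :
    Prov (.imp (.imp φ .bot) (.imp (.imp (.neg φ) .bot) .bot)) :=
  Prov.taut fun v => by cases hφ : φ.eval v <;> simp [Formula.eval, hφ]

/-! ### Basic facts about `ProvFrom` -/

private lemma provFrom_mono {X Y : Set (Formula α Ag)} (hXY : X ⊆ Y)
    {φ : Formula α Ag} (h : ProvFrom X φ) : ProvFrom Y φ := by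
  induction h with
  | hyp hm => exact ProvFrom.hyp (hXY hm)
  | thm ht => exact ProvFrom.thm ht
  | mp _ _ ih1 ih2 => exact ProvFrom.mp ih1 ih2

private lemma provFrom_empty {φ : Formula α Ag}
    (h : ProvFrom (∅ : Set (Formula α Ag)) φ) : Prov φ := by
  induction h with
  | hyp hm => exact absurd hm (Set.notMem_empty _)
  | thm ht => exact ht
  | mp _ _ ih1 ih2 => exact Prov.mp ih1 ih2

/-- Deduction theorem. -/
private lemma deduction {X : Set (Formula α Ag)} {χ φ : Formula α Ag}
    (h : ProvFrom (insert χ X) φ) : ProvFrom X (.imp χ φ) := by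
  induction h with
  | hyp hm =>
    rcases hm with rfl | hm
    · exact ProvFrom.thm (taut_id _)
    · exact ProvFrom.mp (ProvFrom.thm (taut_k _ _)) (ProvFrom.hyp hm)
  | thm ht => exact ProvFrom.mp (ProvFrom.thm (taut_k _ _)) (ProvFrom.thm ht)
  | mp _ _ ih1 ih2 =>
    exact ProvFrom.mp (ProvFrom.mp (ProvFrom.thm (taut_s _ _ _)) ih1) ih2

/-- Compactness: derivations use finitely many hypotheses. -/
private lemma provFrom_finite {X : Set (Formula α Ag)} {φ : Formula α Ag}
    (h : ProvFrom X φ) :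
    ∃ L : List (Formula α Ag), (∀ ψ ∈ L, ψ ∈ X) ∧
      ProvFrom {ψ | ψ ∈ L} φ := by
  induction h with
  | @hyp ψ hm => exact ⟨[ψ], by simpa using hm, ProvFrom.hyp (by simp)⟩
  | thm ht => exact ⟨[], by simp, ProvFrom.thm ht⟩
  | mp _ _ ih1 ih2 =>
    obtain ⟨L₁, hL₁, hp₁⟩ := ih1
    obtain ⟨L₂, hL₂, hp₂⟩ := ih2
    have hm1 : ProvFrom {ψ | ψ ∈ L₁ ++ L₂} _ :=
      provFrom_mono (fun ψ hψ => by simp at hψ ⊢; exact Or.inl hψ) hp₁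
    have hm2 : ProvFrom {ψ | ψ ∈ L₁ ++ L₂} _ :=
      provFrom_mono (fun ψ hψ => by simp at hψ ⊢; exact Or.inr hψ) hp₂
    refine ⟨L₁ ++ L₂, ?_, ProvFrom.mp hm1 hm2⟩
    intro ψ hψ
    rcases List.mem_append.mp hψ with h' | h'
    · exact hL₁ ψ h'
    · exact hL₂ ψ h'

/-- Super-distributivity over a finite list of hypotheses. -/
private lemma know_list (C : Set Ag) :
    ∀ (L : List (Formula α Ag)) (φ : Formula α Ag),
      ProvFrom {ψ | ψ ∈ L} φ →
      ProvFrom {ψ | ψ ∈ L.map (.know C)} (.know C φ)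
  | [], φ, h => by
    have : ProvFrom (∅ : Set (Formula α Ag)) φ := by
      refine provFrom_mono (fun ψ hψ => ?_) h
      simp at hψ
    exact ProvFrom.thm (Prov.necK C (provFrom_empty this))
  | χ :: L, φ, h => by
    have hset : {ψ : Formula α Ag | ψ ∈ χ :: L} = insert χ {ψ | ψ ∈ L} := by
      ext ψ; simp
    rw [hset] at h
    have h1 : ProvFrom {ψ | ψ ∈ L} (.imp χ φ) := deduction h
    have h2 := know_list C L (.imp χ φ) h1
    have h3 : ProvFrom {ψ | ψ ∈ L.map (.know C)}
        (.imp (.know C χ) (.know C φ)) :=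
      ProvFrom.mp (ProvFrom.thm (Prov.distrib C χ φ)) h2
    have hsub : {ψ : Formula α Ag | ψ ∈ L.map (.know C)} ⊆
        {ψ | ψ ∈ (χ :: L).map (.know C)} := by
      intro ψ hψ; simp at hψ ⊢; tauto
    exact ProvFrom.mp (provFrom_mono hsub h3)
      (ProvFrom.hyp (by simp))

/-! ### MCS facts -/

private lemma mcs_closed {X : Set (Formula α Ag)} (hX : MCS X)
    {φ : Formula α Ag} (h : ProvFrom X φ) : φ ∈ X := by
  rcases hX.2 φ with hm | hm
  · exact hm
  · exact absurd
      (ProvFrom.mp (ProvFrom.mp (ProvFrom.thm (taut_contra φ)) h)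
        (ProvFrom.hyp hm)) hX.1

private lemma mcs_not_mem {X : Set (Formula α Ag)} (hX : MCS X)
    {φ : Formula α Ag} (hn : Formula.neg φ ∈ X) : φ ∉ X := fun hm =>
  hX.1 (ProvFrom.mp (ProvFrom.mp (ProvFrom.thm (taut_contra φ))
    (ProvFrom.hyp hm)) (ProvFrom.hyp hn))

/-- Chains of sets absorb finite lists. -/
private lemma chain_list {β : Type} {c : Set (Set β)}
    (hc : IsChain (· ⊆ ·) c) (hne : c.Nonempty) :
    ∀ L : List β, (∀ x ∈ L, ∃ Z ∈ c, x ∈ Z) → ∃ Z ∈ c, ∀ x ∈ L, x ∈ Z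
  | [], _ => ⟨hne.choose, hne.choose_spec, by simp⟩
  | x :: L, hmem => by
    obtain ⟨Z₁, hZ₁c, hZ₁⟩ := chain_list hc hne L fun y hy =>
      hmem y (List.mem_cons_of_mem _ hy)
    obtain ⟨Z₂, hZ₂c, hZ₂⟩ := hmem x List.mem_cons_self
    by_cases hEq : Z₁ = Z₂
    · exact ⟨Z₂, hZ₂c, by
        intro y hy
        rcases List.mem_cons.mp hy with rfl | hy
        · exact hZ₂
        · exact hEq ▸ hZ₁ y hy⟩
    · rcases hc hZ₁c hZ₂c hEq with hsub | hsub
      · exact ⟨Z₂, hZ₂c, fun y hy => by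
          rcases List.mem_cons.mp hy with rfl | hy
          · exact hZ₂
          · exact hsub (hZ₁ y hy)⟩
      · exact ⟨Z₁, hZ₁c, fun y hy => by
          rcases List.mem_cons.mp hy with rfl | hy
          · exact hsub hZ₂
          · exact hZ₁ y hy⟩

/-- Lindenbaum's lemma. -/
private lemma lindenbaum {X : Set (Formula α Ag)} (h : Consistent X) :
    ∃ Y, X ⊆ Y ∧ MCS Y := by
  have hchainH : ∀ c ⊆ {Y : Set (Formula α Ag) | Consistent Y},
      IsChain (· ⊆ ·) c → c.Nonempty →
      ∃ ub ∈ {Y : Set (Formula α Ag) | Consistent Y}, ∀ s ∈ c, s ⊆ ub := by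
    intro c hcS hchain hcne
    refine ⟨⋃₀ c, ?_, fun s hs => Set.subset_sUnion_of_mem hs⟩
    intro hbot
    obtain ⟨L, hL, hLp⟩ := provFrom_finite hbot
    obtain ⟨Z, hZc, hZ⟩ := chain_list hchain hcne L fun x hx => hL x hx
    exact hcS hZc (provFrom_mono (fun ψ hψ => hZ ψ hψ) hLp)
  obtain ⟨M, hXM, hM⟩ := zorn_subset_nonempty
      {Y : Set (Formula α Ag) | Consistent Y} hchainH X h
  refine ⟨M, hXM, hM.1, fun φ => ?_⟩
  by_contra hcon
  push_neg at hcon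
  obtain ⟨hφ, hnφ⟩ := hcon
  have h1 : ¬ Consistent (insert φ M) := fun hc =>
    hφ (hM.2 hc (Set.subset_insert _ _) (Set.mem_insert _ _))
  have h2 : ¬ Consistent (insert (Formula.neg φ) M) := fun hc =>
    hnφ (hM.2 hc (Set.subset_insert _ _) (Set.mem_insert _ _))
  rw [Consistent, not_not] at h1 h2
  exact hM.1 (ProvFrom.mp (ProvFrom.mp (ProvFrom.thm (taut_cases φ))
    (deduction h1)) (deduction h2))

/-- The head of a canonical state is maximal consistent. -/
private lemma hd_mcs {X₀ : Set (Formula α Ag)} (hX₀ : MCS X₀) :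
    ∀ {w : List (Set Ag × Set (Formula α Ag))},
      IsCanState X₀ w → MCS (hd X₀ w)
  | [], _ => hX₀
  | (C, X) :: w, hw => hw.2.1

end Aux

/-- Canonical existence lemma for knowledge: if `K_C φ ∉ hd w`, then the set
`{¬φ} ∪ {ψ : K_C ψ ∈ hd w}` is consistent and there is a canonical state `u`
with `w ∼_C u` and `φ ∉ hd u`. -/
theorem knowledge_exists {α Ag : Type} {X₀ : Set (Formula α Ag)}
    (hX₀ : MCS X₀) {w : List (Set Ag × Set (Formula α Ag))}
    (hw : IsCanState X₀ w) {C : Set Ag} {φ : Formula α Ag}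
    (h : Formula.know C φ ∉ hd X₀ w) :
    Consistent ({Formula.neg φ} ∪ {ψ | Formula.know C ψ ∈ hd X₀ w}) ∧
    ∃ u, IsCanState X₀ u ∧ CSimC C w u ∧ φ ∉ hd X₀ u := by
  have hmcsw : MCS (hd X₀ w) := hd_mcs hX₀ hw
  set S : Set (Formula α Ag) := {ψ | Formula.know C ψ ∈ hd X₀ w} with hS
  have hcons : Consistent ({Formula.neg φ} ∪ S) := by
    intro hbot
    rw [Set.singleton_union] at hbot
    have h1 : ProvFrom S (.imp (.neg φ) .bot) := deduction hbot
    have h2 : ProvFrom S φ := ProvFrom.mp (ProvFrom.thm (taut_dne φ)) h1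
    obtain ⟨L, hL, hLp⟩ := provFrom_finite h2
    have h3 := know_list C L φ hLp
    have hsub : {ψ : Formula α Ag | ψ ∈ L.map (.know C)} ⊆ hd X₀ w := by
      intro ψ hψ
      simp only [Set.mem_setOf_eq, List.mem_map] at hψ
      obtain ⟨χ, hχ, rfl⟩ := hψ
      exact hL χ hχ
    have h4 : ProvFrom (hd X₀ w) (.know C φ) := provFrom_mono hsub h3
    exact h (mcs_closed hmcsw h4)
  refine ⟨hcons, ?_⟩
  obtain ⟨Y, hXY, hY⟩ := lindenbaum hcons
  refine ⟨(C, Y) :: w, ⟨hw, hY, fun ψ hψ => hXY (Or.inr hψ)⟩, ?_, ?_⟩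
  · intro a ha
    refine ⟨w, List.suffix_rfl, List.suffix_cons _ _, ?_, ?_⟩
    · simp
    · intro p hp
      simp only [List.length_cons, Nat.add_sub_cancel_left,
        List.take_succ_cons, List.take_zero, List.mem_singleton] at hp
      subst hp
      exact ha
  · exact mcs_not_mem hY (hXY (Or.inl rfl))
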